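/- Let n ≥ 1, let A₁, A₂, A₃ be n×n complex matrices, and let c, μ, z ∈ ℂ. Let G₁, G₂, G₃ ∈ M_{3n}(ℂ) be the block matrices whose (i,j)-block is c·A_j + δ_{ij}·μ·I_n in the i-th block row and zero elsewhere (i = 1, 2, 3). Then det(G₁ + G₂ + G₃ − z·I_{3n}) = (μ − z)^{2n} · det(c·(A₁ + A₂ + A₃) + (μ − z)·I_n). -/

import Mathlib

open Matrix

/-- The characteristic polynomial of `G₁ + G₂ + G₃`:
`det(G₁ + G₂ + G₃ − zI) = (μ − z)^{2n}·det(c(A₁ + A₂ + A₃) + (μ − z)I)`. -/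
theorem det_G_sum (n : ℕ) (hn : 1 ≤ n) (A : Fin 3 → Matrix (Fin n) (Fin n) ℂ)
    (c μ z : ℂ)
    (G : Fin 3 → Matrix (Fin 3 × Fin n) (Fin 3 × Fin n) ℂ)
    (hG : ∀ i, G i = Matrix.of fun p r : Fin 3 × Fin n =>
      if p.1 = i then
        c * (A r.1) p.2 r.2 + (if r.1 = i ∧ p.2 = r.2 then μ else 0)
      else 0) :
    (G 0 + G 1 + G 2 - z • (1 : Matrix (Fin 3 × Fin n) (Fin 3 × Fin n) ℂ)).det =
      (μ - z) ^ (2 * n) *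
        (c • (A 0 + A 1 + A 2) + (μ - z) • (1 : Matrix (Fin n) (Fin n) ℂ)).det := by
  set w := μ - z with hw
  set M : Matrix (Fin 3 × Fin n) (Fin 3 × Fin n) ℂ :=
    G 0 + G 1 + G 2 - z • 1 with hM
  -- the reindexing equivalence
  let e : (Fin n ⊕ Fin 2 × Fin n) ≃ Fin 3 × Fin n :=
    { toFun := fun x => match x with
        | Sum.inl p => (0, p)
        | Sum.inr (i, p) => (i.succ, p)
      invFun := fun x => Fin.cases (Sum.inl x.2) (fun j => Sum.inr (j, x.2)) x.1
      left_inv := by rintro (p | ⟨i, p⟩) <;> simp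
      right_inv := by
        rintro ⟨i, p⟩
        refine Fin.cases ?_ (fun j => ?_) i <;> simp }
  -- the blocks
  set P : Matrix (Fin n) (Fin n) ℂ := c • A 0 + w • 1 with hP
  set Q : Matrix (Fin n) (Fin 2 × Fin n) ℂ :=
    Matrix.of (fun p q => c * A q.1.succ p q.2) with hQ
  set C : Matrix (Fin 2 × Fin n) (Fin n) ℂ :=
    Matrix.of (fun q r => c * A 0 q.2 r) with hC
  set B : Matrix (Fin 2 × Fin n) (Fin 2 × Fin n) ℂ :=
    Matrix.of (fun p q => c * A q.1.succ p.2 q.2) with hB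
  set U : Matrix (Fin 2 × Fin n) (Fin n) ℂ :=
    Matrix.of (fun q r => if q.2 = r then 1 else 0) with hU
  have hMe : ∀ (i : Fin 3) (p : Fin n) (j : Fin 3) (r : Fin n),
      M (i, p) (j, r) = c * A j p r + (if i = j ∧ p = r then w else 0) := by
    intro i p j r
    fin_cases i <;> fin_cases j <;>
      simp only [hM, Matrix.sub_apply, Matrix.add_apply, Matrix.smul_apply, one_apply, hG 0, hG 1, hG 2,
        of_apply, Prod.mk.injEq, hw, smul_eq_mul] <;>
      norm_num [Fin.ext_iff] <;> split_ifs <;> simp_all <;> ring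
  have hM' : M.submatrix e e = fromBlocks P Q C (B + w • 1) := by
    ext x y
    rcases x with p | ⟨i, p⟩ <;> rcases y with r | ⟨j, r⟩
    · show M (0, p) (0, r) = P p r
      simp [hMe, hP, one_apply]
    · show M (0, p) (j.succ, r) = Q p (j, r)
      simp [hMe, hQ, (Fin.succ_ne_zero j).symm]
    · show M (i.succ, p) (0, r) = C (i, p) r
      simp [hMe, hC, Fin.succ_ne_zero i]
    · show M (i.succ, p) (j.succ, r) = (B + w • 1) (i, p) (j, r)
      simp [hMe, hB, Fin.succ_inj, one_apply, Prod.ext_iff, Matrix.add_apply]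
  have hUP : U * P = C + w • U := by
    ext q r
    simp [mul_apply, hU, hP, hC, ite_mul, one_apply, Matrix.smul_apply, Finset.sum_ite_eq,
      Matrix.add_apply, Matrix.smul_apply, mul_comm]
  have hUQ : U * Q = B := by
    ext q s
    simp [mul_apply, hU, hQ, hB, ite_mul, Finset.sum_ite_eq]
  have hQU : Q * U = c • (A 1 + A 2) := by
    ext p r
    simp [mul_apply, hU, hQ, Fintype.sum_prod_type, mul_ite, Finset.sum_ite_eq,
      Fin.sum_univ_two, Matrix.add_apply, mul_add]
  have key : (fromBlocks 1 0 (-U) 1) * M.submatrix e e * (fromBlocks 1 0 U 1)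
      = fromBlocks (c • (A 0 + A 1 + A 2) + w • 1) Q 0 (w • (1 : Matrix (Fin 2 × Fin n) (Fin 2 × Fin n) ℂ)) := by
    rw [hM', fromBlocks_multiply, fromBlocks_multiply]
    simp only [Matrix.one_mul, Matrix.zero_mul, Matrix.mul_one, Matrix.mul_zero,
      add_zero, zero_add, Matrix.neg_mul, hUP, hUQ, hQU, Matrix.add_mul,
      Matrix.smul_mul]
    have h1 : P + c • (A 1 + A 2) = c • (A 0 + A 1 + A 2) + w • 1 := by
      rw [hP]; module
    have h2 : -(C + w • U) + C + (-(B * U) + (B * U + w • U)) = 0 := by abel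
    have h3 : -B + (B + w • (1 : Matrix (Fin 2 × Fin n) (Fin 2 × Fin n) ℂ)) = w • 1 := by abel
    rw [h1, h2, h3]
  have hdet1 : (fromBlocks (1 : Matrix (Fin n) (Fin n) ℂ) 0 (-U) 1).det = 1 := by
    rw [Matrix.det_fromBlocks_zero₁₂]; simp
  have hdet2 : (fromBlocks (1 : Matrix (Fin n) (Fin n) ℂ) 0 U 1).det = 1 := by
    rw [Matrix.det_fromBlocks_zero₁₂]; simp
  have hcard : Fintype.card (Fin 2 × Fin n) = 2 * n := by simp
  calc M.det = (M.submatrix e e).det := (Matrix.det_submatrix_equiv_self e M).symm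
    _ = (fromBlocks (1 : Matrix (Fin n) (Fin n) ℂ) 0 (-U) 1).det *
          (M.submatrix e e).det * (fromBlocks (1 : Matrix (Fin n) (Fin n) ℂ) 0 U 1).det := by
        rw [hdet1, hdet2]; ring
    _ = ((fromBlocks 1 0 (-U) 1) * M.submatrix e e * (fromBlocks 1 0 U 1)).det := by
        rw [Matrix.det_mul, Matrix.det_mul]
    _ = w ^ (2 * n) * (c • (A 0 + A 1 + A 2) + w • (1 : Matrix (Fin n) (Fin n) ℂ)).det := by
        rw [key, Matrix.det_fromBlocks_zero₂₁, Matrix.det_smul, Matrix.det_one, hcard]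
        ring
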